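/- arXiv:2004.07243 — 2 statements merged into one kernel-verified Lean document; each statement's English description precedes it below -/
import Mathlib

section
/- Let N be even and define the measurement-update map on subgroups of the group of invertible matrices: Meas(G, M, ε) = G if the Hermitian Pauli string M commutes with every element of G, and otherwise Meas(G, M, ε) is the subgroup generated by C_G(M) ∪ {ε M}, where ε ∈ {1, −1}. Let G₀ be the subgroup generated by Z 1, …, Z N, and let G be obtained from G₀ by finitely many updates G ↦ Meas(G, M, ε), where each measured operator M is either Z i (1 ≤ i ≤ N) or g i = X(i−1) Z i X(i+1) (2 ≤ i ≤ N−1) and each ε ∈ {1, −1} is arbitrary. Then G is generated by N elements, each of which is, up to a sign ±1, of one of the four forms: Z_{2j+1,2k+1} = ∏_{i=j}^{k} Z(2i+1); Z_{2j,2k} = ∏_{i=j}^{k} Z(2i); g_{2j+1,2k+1} = X(2j+1) Z_{2j+2,2k} X(2k+1); g_{2j,2k} = X(2j) Z_{2j+1,2k−1} X(2k). -/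
open scoped Classical
open scoped Matrix
noncomputable section
namespace QStab

/-- The space of operators (matrices) on a chain of qubits indexed by `ι`. -/
abbrev Op (ι : Type*) [Fintype ι] [DecidableEq ι] : Type _ :=
  Matrix (ι → Fin 2) (ι → Fin 2) ℂ

variable {ι : Type*} [Fintype ι] [DecidableEq ι]

/-- The Pauli `X` operator at site `i`. -/
def PX (i : ι) : Op ι :=
  Matrix.of fun f g => if f = Function.update g i (g i + 1) then 1 else 0

/-- The Pauli `Z` operator at site `i`. -/
def PZ (i : ι) : Op ι :=
  Matrix.of fun f g => if f = g then ((-1 : ℂ)) ^ ((f i : ℕ)) else 0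

/-- The (ordered) product `∏ i, (X i)^(a i)`. -/
def XProd (a : ι → Fin 2) : Op ι :=
  (Finset.univ.toList.map fun i => PX i ^ ((a i : ℕ))).prod

/-- The (ordered) product `∏ i, (Z i)^(b i)`. -/
def ZProd (b : ι → Fin 2) : Op ι :=
  (Finset.univ.toList.map fun i => PZ i ^ ((b i : ℕ))).prod

/-- `c` is one of the allowed phases `1, −1, i, −i` of a Pauli string. -/
def IsPhase (c : ℂ) : Prop := c = 1 ∨ c = -1 ∨ c = Complex.I ∨ c = -Complex.I

/-- `M` is a Pauli string: `M = c • (∏ i, (X i)^(a i)) * (∏ i, (Z i)^(b i))`. -/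
def IsPauli (M : Op ι) : Prop :=
  ∃ (c : ℂ) (a b : ι → Fin 2), IsPhase c ∧ M = c • (XProd a * ZProd b)

/-- `M` is a Pauli string acting as the identity on every site outside `A`. -/
def IsPauliSupportedOn (A : Finset ι) (M : Op ι) : Prop :=
  ∃ (c : ℂ) (a b : ι → Fin 2), IsPhase c ∧ (∀ i, i ∉ A → a i = 0 ∧ b i = 0) ∧
    M = c • (XProd a * ZProd b)

/-- `M` is a Pauli string acting trivially (as the identity) at the site `i`. -/
def ActsTriviallyAt (i : ι) (M : Op ι) : Prop :=
  ∃ (c : ℂ) (a b : ι → Fin 2), IsPhase c ∧ a i = 0 ∧ b i = 0 ∧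
    M = c • (XProd a * ZProd b)

/-- The function on all of `ι` agreeing with `f` on `A` and with `h` on `Aᶜ`. -/
def combine (A : Finset ι) (f : ↥A → Fin 2) (h : ↥(Aᶜ) → Fin 2) : ι → Fin 2 :=
  fun i => if hi : i ∈ A then f ⟨i, hi⟩ else h ⟨i, Finset.mem_compl.mpr hi⟩

/-- The partial trace over the qubits outside `A` (the reduced density matrix on `A`). -/
def ptrace (A : Finset ι) (ρ : Op ι) : Matrix (↥A → Fin 2) (↥A → Fin 2) ℂ :=
  Matrix.of fun f g => ∑ h : ↥(Aᶜ) → Fin 2, ρ (combine A f h) (combine A g h)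

/-- The rank-one projector `|ψ⟩⟨ψ|`. -/
def outer (ψ : (ι → Fin 2) → ℂ) : Op ι :=
  Matrix.of fun f g => ψ f * star (ψ g)

/-- `ψ` is a unit vector. -/
def IsUnitVec (ψ : (ι → Fin 2) → ℂ) : Prop :=
  ∑ f, Complex.normSq (ψ f) = 1

/-- The von Neumann entropy `−Tr(ρ log ρ)` of a Hermitian matrix, computed through its
eigenvalues (with the convention `0 log 0 = 0`, and junk value `0` on non-Hermitian input). -/
def vnEntropy {n : Type*} [Fintype n] [DecidableEq n] (ρ : Matrix n n ℂ) : ℝ :=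
  if h : ρ.IsHermitian then -∑ i, (h.eigenvalues i * Real.log (h.eigenvalues i)) else 0

/-- The von Neumann entanglement entropy of `ψ` in the region `A`:
`S_A(ψ) = −Tr(ρ_A log ρ_A)` where `ρ_A` is the reduced density matrix of `|ψ⟩⟨ψ|`. -/
def entEntropy (A : Finset ι) (ψ : (ι → Fin 2) → ℂ) : ℝ :=
  vnEntropy (ptrace A (outer ψ))

/-- The product of the `s i` over the subset `T` (in increasing order of indices). -/
def subProd {N : ℕ} (s : Fin N → Op ι) (T : Finset (Fin N)) : Op ι :=
  ((Finset.sort T (· ≤ ·)).map s).prod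

/-- `{s 0, …, s (N-1)}` is an independent set of `N` Hermitian pairwise commuting Pauli
strings: products over distinct subsets are pairwise distinct and no nonempty product
equals `±I`. -/
def IndepStabs {N : ℕ} (s : Fin N → Op ι) : Prop :=
  (∀ i, IsPauli (s i)) ∧ (∀ i, (s i).IsHermitian) ∧
  (∀ i j, Commute (s i) (s j)) ∧
  Function.Injective (subProd s) ∧
  (∀ T : Finset (Fin N), T.Nonempty → subProd s T ≠ 1 ∧ subProd s T ≠ -1)

/-- The 1-based label of the site `i : Fin N`, so that the qubits are labeled `1, …, N`. -/
def lbl {N : ℕ} (i : Fin N) : ℕ := (i : ℕ) + 1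

/-- The single-qubit operator `Z p` at the site with label `p` (1-based). -/
def ZSingle (N : ℕ) (p : ℕ) : Op (Fin N) :=
  ZProd fun i => if lbl i = p then 1 else 0

/-- The string of `Z`'s at the labels `p, p+2, …, q` (sites of the parity of `p` in `[p,q]`). -/
def ZStr (N : ℕ) (p q : ℕ) : Op (Fin N) :=
  ZProd fun i => if p ≤ lbl i ∧ lbl i ≤ q ∧ lbl i % 2 = p % 2 then 1 else 0

/-- The string operator `g_{p,q} = X p * (∏_{k=0}^{(q−p)/2−1} Z (p+2k+1)) * X q`
for labels `p < q` of the same parity.  In particular the cluster stabilizer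
`g i = X (i−1) * Z i * X (i+1)` is `GStr N (i-1) (i+1)`. -/
def GStr (N : ℕ) (p q : ℕ) : Op (Fin N) :=
  (XProd fun i => if lbl i = p ∨ lbl i = q then 1 else 0) *
    ZProd fun i => if p < lbl i ∧ lbl i < q ∧ ¬(lbl i % 2 = p % 2) then 1 else 0

/-- `G1 = ∏_{i even} Z i` (even labels). -/
def Gsym1 (N : ℕ) : Op (Fin N) := ZProd fun i => if lbl i % 2 = 0 then 1 else 0

/-- `G2 = ∏_{i odd} Z i` (odd labels). -/
def Gsym2 (N : ℕ) : Op (Fin N) := ZProd fun i => if lbl i % 2 = 1 then 1 else 0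

/-- The measurement channel `𝓔_S(ρ) = Π₊ ρ Π₊ + Π₋ ρ Π₋` with `Π± = (I ± S)/2`. -/
def measChannel (S ρ : Op ι) : Op ι :=
  ((2 : ℂ)⁻¹ • (1 + S)) * ρ * ((2 : ℂ)⁻¹ • (1 + S)) +
    ((2 : ℂ)⁻¹ • (1 - S)) * ρ * ((2 : ℂ)⁻¹ • (1 - S))

/-- Measurement-update map on stabilizer groups: if the measured Pauli `M` commutes with
every element of `G` the group is unchanged; otherwise the new group is generated by the
centralizer `C_G(M)` together with `ε • M` (where `ε` is the measurement outcome sign). -/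
def Meas (G : Submonoid (Op ι)) (M : Op ι) (ε : ℂ) : Submonoid (Op ι) :=
  if ∀ g ∈ G, M * g = g * M then G
  else Submonoid.closure ({g | g ∈ G ∧ M * g = g * M} ∪ {ε • M})

/-- The isolated-SPT stabilizer set `𝒮(A)`: the string operators `g_{q_i, q_{i+1}}` between
consecutive elements of `A`, together with the total `Z`-product `∏_{p ∈ A} Z p`. -/
def SPTstabs (N : ℕ) (A : Finset ℕ) : Set (Op (Fin N)) :=
  {m | (∃ p ∈ A, ∃ q ∈ A, p < q ∧ (∀ r ∈ A, ¬(p < r ∧ r < q)) ∧ m = GStr N p q) ∨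
    m = ZProd fun i => if lbl i ∈ A then 1 else 0}

/-- The block of the partition `P` containing `x`. -/
def blockOf (P : Finset (Finset ℕ)) (x : ℕ) : Finset ℕ :=
  P.sup fun A => if x ∈ A then A else ∅

/-- Partition update for the move “measure `Z i`”: `i` is split off into its own block. -/
def updZ (P : Finset (Finset ℕ)) (i : ℕ) : Finset (Finset ℕ) :=
  insert {i} ((P.image fun A => A.erase i).erase ∅)

/-- Partition update for the move “measure `g i`”: the blocks of `i−1` and `i+1` merge. -/
def updG (P : Finset (Finset ℕ)) (i : ℕ) : Finset (Finset ℕ) :=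
  insert (blockOf P (i - 1) ∪ blockOf P (i + 1))
    ((P.erase (blockOf P (i - 1))).erase (blockOf P (i + 1)))

/-- The partition of `{1, …, N}` into singletons. -/
def startPart (N : ℕ) : Finset (Finset ℕ) := (Finset.Icc 1 N).image fun i => {i}

/-- The matrix `M`, supported on `A`, viewed as an operator on the qubits in `A` only. -/
def restrictOp (A : Finset ι) (M : Op ι) : Matrix (↥A → Fin 2) (↥A → Fin 2) ℂ :=
  Matrix.of fun f g =>
    M (fun i => if hi : i ∈ A then f ⟨i, hi⟩ else 0)
      (fun i => if hi : i ∈ A then g ⟨i, hi⟩ else 0)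

/- ## Part 1: Pauli calculus -/

set_option linter.unusedSectionVars false

lemma fin2_add_self (x : Fin 2) : x + x = 0 := by fin_cases x <;> rfl

lemma fin2_eq_zero_or_one (x : Fin 2) : x = 0 ∨ x = 1 := by omega

lemma pi2_add_self (v : ι → Fin 2) : v + v = 0 := by
  funext j; exact fin2_add_self (v j)

def sgn (x : Fin 2) : ℂ := if x = 0 then 1 else -1

lemma sgn_zero : sgn 0 = 1 := rfl

lemma sgn_add (x y : Fin 2) : sgn (x + y) = sgn x * sgn y := by
  fin_cases x <;> fin_cases y <;>
    (try rw [show ((1 : Fin 2) + 1) = 0 from rfl]) <;> norm_num [sgn] <;> decide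

lemma sgn_cases (x : Fin 2) : sgn x = 1 ∨ sgn x = -1 := by
  fin_cases x <;> simp [sgn]

lemma sgn_inj {x y : Fin 2} (h : sgn x = sgn y) : x = y := by
  fin_cases x <;> fin_cases y <;> simp_all [sgn] <;> norm_num at h

lemma sgn_eq_pow (x : Fin 2) : sgn x = (-1 : ℂ) ^ (x : ℕ) := by
  fin_cases x <;> simp [sgn]

def ip (b a : ι → Fin 2) : Fin 2 := ∑ j, b j * a j

lemma ip_comm (b a : ι → Fin 2) : ip b a = ip a b := by
  simp [ip, mul_comm]

lemma ip_add_left (b b' a : ι → Fin 2) : ip (b + b') a = ip b a + ip b' a := by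
  simp [ip, add_mul, Finset.sum_add_distrib]

lemma ip_add_right (b a a' : ι → Fin 2) : ip b (a + a') = ip b a + ip b a' := by
  simp [ip, mul_add, Finset.sum_add_distrib]

lemma ip_zero_left (a : ι → Fin 2) : ip 0 a = 0 := by simp [ip]

lemma ip_zero_right (b : ι → Fin 2) : ip b 0 = 0 := by simp [ip]

lemma ip_sum_left {α : Type*} (T : Finset α) (B : α → ι → Fin 2) (a : ι → Fin 2) :
    ip (∑ t ∈ T, B t) a = ∑ t ∈ T, ip (B t) a := by
  classical
  induction T using Finset.cons_induction with
  | empty => simp [ip_zero_left]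
  | cons t T ht IH => rw [Finset.sum_cons, Finset.sum_cons, ip_add_left, IH]

def Xs (a : ι → Fin 2) : Op ι := Matrix.of fun f g => if f = g + a then 1 else 0

def Zs (b : ι → Fin 2) : Op ι := Matrix.of fun f g => if f = g then sgn (ip b g) else 0

def Pau (a b : ι → Fin 2) : Op ι := Xs a * Zs b

lemma Pau_apply (a b : ι → Fin 2) (f g : ι → Fin 2) :
    Pau a b f g = if f = g + a then sgn (ip b g) else 0 := by
  unfold Pau Xs Zs
  rw [Matrix.mul_apply]
  rw [Finset.sum_eq_single g]
  · simp
  · intro h _ hh; simp [Matrix.of_apply, hh]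
  · simp

lemma Pau_mul (a b a' b' : ι → Fin 2) :
    Pau a b * Pau a' b' = sgn (ip b a') • Pau (a + a') (b + b') := by
  ext f g
  rw [Matrix.mul_apply, Matrix.smul_apply]
  rw [Finset.sum_eq_single (g + a')]
  · rw [Pau_apply, Pau_apply, Pau_apply]
    by_cases h : f = g + a' + a
    · have h2 : f = g + (a + a') := by rw [h]; abel
      simp only [if_pos h, if_pos h2, ip_add_right, ip_add_left, sgn_add, smul_eq_mul, if_true]
      ring
    · have h2 : ¬ f = g + (a + a') := by
        intro hc; apply h; rw [hc]; abel
      simp [h, h2]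
  · intro h _ hh
    rw [Pau_apply, Pau_apply]
    simp only [if_neg hh, mul_zero]
  · simp

lemma Xs_zero : (Xs 0 : Op ι) = 1 := by
  ext f g; simp [Xs, Matrix.one_apply]

lemma Zs_zero : (Zs 0 : Op ι) = 1 := by
  ext f g; simp [Zs, Matrix.one_apply, ip_zero_left, sgn_zero]

lemma Pau_zero : (Pau 0 0 : Op ι) = 1 := by
  rw [Pau, Xs_zero, Zs_zero, one_mul]

lemma Pau_zero_left (b : ι → Fin 2) : Pau 0 b = Zs b := by
  rw [Pau, Xs_zero, one_mul]

lemma Pau_zero_right (a : ι → Fin 2) : Pau a 0 = Xs a := by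
  rw [Pau, Zs_zero, mul_one]

lemma Pau_sq (a b : ι → Fin 2) : Pau a b * Pau a b = sgn (ip b a) • 1 := by
  rw [Pau_mul, pi2_add_self, pi2_add_self, Pau_zero]

lemma Pau_smul_inj {a b : ι → Fin 2} {c d : ℂ}
    (h : c • Pau a b = d • Pau a b) : c = d := by
  have := congrFun (congrFun h ((0 : ι → Fin 2) + a)) 0
  simpa [Matrix.smul_apply, Pau_apply, ip_zero_right, sgn_zero] using this

lemma Zs_mul (b b' : ι → Fin 2) : Zs b * Zs b' = Zs (b + b') := by
  have := Pau_mul (0 : ι → Fin 2) b 0 b'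
  simpa [Pau_zero_left, ip_zero_right, sgn_zero, Zs] using this

lemma Xs_mul (a a' : ι → Fin 2) : Xs a * Xs a' = Xs (a + a') := by
  have := Pau_mul a (0 : ι → Fin 2) a' 0
  simpa [Pau_zero_right, ip_zero_left, sgn_zero] using this

lemma PZ_eq (i : ι) : PZ i = Zs (Pi.single i 1) := by
  ext f g
  simp only [PZ, Zs, Matrix.of_apply]
  by_cases h : f = g
  · subst h
    simp only [if_pos rfl]
    rw [sgn_eq_pow]
    congr 1
    have : ip (Pi.single i 1) f = f i := by
      rw [ip, Finset.sum_eq_single i]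
      · simp
      · intro j _ hj; simp [Pi.single_apply, hj]
      · simp
    rw [this]
  · simp [h]

lemma PX_eq (i : ι) : PX i = Xs (Pi.single i 1) := by
  ext f g
  simp only [PX, Xs, Matrix.of_apply]
  have : Function.update g i (g i + 1) = g + Pi.single i 1 := by
    funext j
    by_cases hj : j = i
    · subst hj; simp
    · simp [Function.update_of_ne hj, Pi.single_apply, hj]
  rw [this]

lemma pow_PZ (i : ι) (x : Fin 2) : PZ i ^ (x : ℕ) = Zs (Pi.single i x) := by
  fin_cases x
  · simp [Zs_zero]
  · simp [PZ_eq]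

lemma pow_PX (i : ι) (x : Fin 2) : PX i ^ (x : ℕ) = Xs (Pi.single i x) := by
  fin_cases x
  · simp [Xs_zero]
  · simp [PX_eq]

lemma ZProd_eq (b : ι → Fin 2) : ZProd b = Zs b := by
  have key : ∀ l : List ι,
      (l.map fun i => PZ i ^ ((b i : ℕ))).prod = Zs ((l.map fun i => Pi.single i (b i)).sum) := by
    intro l
    induction l with
    | nil => simp [Zs_zero]
    | cons i l IH =>
        rw [List.map_cons, List.prod_cons, IH, pow_PZ, Zs_mul, List.map_cons, List.sum_cons]
  rw [ZProd, key]
  congr 1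
  rw [Finset.sum_map_toList, Finset.univ_sum_single]

lemma XProd_eq (a : ι → Fin 2) : XProd a = Xs a := by
  have key : ∀ l : List ι,
      (l.map fun i => PX i ^ ((a i : ℕ))).prod = Xs ((l.map fun i => Pi.single i (a i)).sum) := by
    intro l
    induction l with
    | nil => simp [Xs_zero]
    | cons i l IH =>
        rw [List.map_cons, List.prod_cons, IH, pow_PX, Xs_mul, List.map_cons, List.sum_cons]
  rw [XProd, key]
  congr 1
  rw [Finset.sum_map_toList, Finset.univ_sum_single]

/- ## Part 2: abstract update machinery -/

variable {n : ℕ}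

lemma op_one_ne_zero : (1 : Op ι) ≠ 0 := by
  intro h
  have := congrFun (congrFun h (fun _ => 0)) (fun _ => 0)
  simp [Matrix.one_apply] at this

lemma closure_unit {s : Fin n → Op ι} (hinv : ∀ t, s t * s t = 1) :
    ∀ g ∈ Submonoid.closure (Set.range s), ∃ g', g * g' = 1 ∧ g' * g = 1 := by
  intro g hg
  induction hg using Submonoid.closure_induction with
  | mem x hx =>
      obtain ⟨t, rfl⟩ := hx
      exact ⟨s t, hinv t, hinv t⟩
  | one => exact ⟨1, one_mul 1, one_mul 1⟩
  | mul x y hx hy ihx ihy =>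
      obtain ⟨x', hx1, hx2⟩ := ihx
      obtain ⟨y', hy1, hy2⟩ := ihy
      refine ⟨y' * x', ?_, ?_⟩
      · calc x * y * (y' * x') = x * (y * y') * x' := by
              rw [mul_assoc, mul_assoc, mul_assoc]
          _ = 1 := by rw [hy1, mul_one, hx1]
      · calc y' * x' * (x * y) = y' * (x' * x) * y := by
              rw [mul_assoc, mul_assoc, mul_assoc]
          _ = 1 := by rw [hx2, mul_one, hy2]

lemma not_comm_and_anti {g M : Op ι} (hM : M * M = 1)
    (hu : ∃ g', g * g' = 1 ∧ g' * g = 1)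
    (h1 : M * g = g * M) (h2 : M * g = -(g * M)) : False := by
  have h4 : g * M = -(g * M) := h1.symm.trans h2
  have h5 : (2 : ℂ) • (g * M) = 0 := by
    rw [two_smul]
    nth_rewrite 2 [h4]
    simp
  have h6 : g * M = 0 := by
    rcases smul_eq_zero.mp h5 with h | h
    · norm_num at h
    · exact h
  have hg0 : g = 0 := by
    have : g * (M * M) = 0 := by rw [← mul_assoc, h6, zero_mul]
    rwa [hM, mul_one] at this
  obtain ⟨g', hg1, _⟩ := hu
  rw [hg0, zero_mul] at hg1
  exact op_one_ne_zero hg1.symm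

lemma comm_of_gens {s : Fin n → Op ι} {M : Op ι}
    (h : ∀ t, M * s t = s t * M) :
    ∀ g ∈ Submonoid.closure (Set.range s), M * g = g * M := by
  intro g hg
  induction hg using Submonoid.closure_induction with
  | mem x hx => obtain ⟨t, rfl⟩ := hx; exact h t
  | one => simp
  | mul x y hx hy ihx ihy => rw [← mul_assoc, ihx, mul_assoc, ihy, mul_assoc]

lemma meas_of_all_comm {s : Fin n → Op ι} {M : Op ι} {ε : ℂ}
    (h : ∀ t, M * s t = s t * M) :
    Meas (Submonoid.closure (Set.range s)) M ε = Submonoid.closure (Set.range s) := by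
  rw [Meas, if_pos (comm_of_gens h)]

lemma sign_of_elem {s : Fin n → Op ι} {M : Op ι}
    (hM : ∀ t, M * s t = s t * M ∨ M * s t = -(s t * M)) :
    ∀ g ∈ Submonoid.closure (Set.range s), M * g = g * M ∨ M * g = -(g * M) := by
  intro g hg
  induction hg using Submonoid.closure_induction with
  | mem x hx => obtain ⟨t, rfl⟩ := hx; exact hM t
  | one => left; simp
  | mul x y hx hy ihx ihy =>
      rcases ihx with h1 | h1 <;> rcases ihy with h2 | h2
      · left; rw [← mul_assoc, h1, mul_assoc, h2, mul_assoc]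
      · right; rw [← mul_assoc, h1, mul_assoc, h2, mul_neg, mul_assoc]
      · right; rw [← mul_assoc, h1, neg_mul, mul_assoc, h2, mul_assoc]
      · left; rw [← mul_assoc, h1, neg_mul, mul_assoc, h2, mul_neg, neg_neg, mul_assoc]

/-- the updated generating family after measuring `M` with outcome `ε` -/
def updFam (s : Fin n → Op ι) (M : Op ι) (ε : ℂ) (k : Fin n) : Fin n → Op ι :=
  fun t => if t = k then ε • M else if M * s t = s t * M then s t else s t * s k

lemma meas_update {s : Fin n → Op ι} {M : Op ι} {ε : ℂ}
    (hcomm : ∀ t u, s t * s u = s u * s t)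
    (hinv : ∀ t, s t * s t = 1)
    (hM : ∀ t, M * s t = s t * M ∨ M * s t = -(s t * M))
    (hMinv : M * M = 1)
    (k : Fin n) (hk : ¬ (M * s k = s k * M)) :
    Meas (Submonoid.closure (Set.range s)) M ε =
      Submonoid.closure (Set.range (updFam s M ε k)) := by
  set G := Submonoid.closure (Set.range s) with hG
  set s' := updFam s M ε k with hs'
  set H := Submonoid.closure (Set.range s') with hH
  have hka : M * s k = -(s k * M) := (hM k).resolve_left hk
  have hskG : s k ∈ G := Submonoid.subset_closure ⟨k, rfl⟩
  have hunit : ∀ g ∈ G, ∃ g', g * g' = 1 ∧ g' * g = 1 := closure_unit hinv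
  have hcommk : ∀ g ∈ G, g * s k = s k * g := by
    intro g hg
    induction hg using Submonoid.closure_induction with
    | mem x hx => obtain ⟨t, rfl⟩ := hx; exact hcomm t k
    | one => simp
    | mul x y hx hy ihx ihy => rw [mul_assoc, ihy, ← mul_assoc, ihx, mul_assoc]
  have main : ∀ g ∈ G, (M * g = g * M → g ∈ H) ∧ (M * g = -(g * M) → g * s k ∈ H) := by
    intro g hg
    induction hg using Submonoid.closure_induction with
    | mem x hx =>
        obtain ⟨t, rfl⟩ := hx
        constructor
        · intro hcm
          have htk : t ≠ k := by rintro rfl; exact hk hcm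
          have : s' t = s t := by rw [hs', updFam]; simp [htk, hcm]
          rw [← this]; exact Submonoid.subset_closure ⟨t, rfl⟩
        · intro ham
          by_cases htk : t = k
          · subst htk; rw [hinv]; exact Submonoid.one_mem H
          · have hnc : ¬ (M * s t = s t * M) := by
              intro hcm
              exact not_comm_and_anti hMinv (hunit (s t) (Submonoid.subset_closure ⟨t, rfl⟩))
                hcm ham
            have : s' t = s t * s k := by rw [hs', updFam]; simp [htk, hnc]
            rw [← this]; exact Submonoid.subset_closure ⟨t, rfl⟩
    | one =>
        constructor
        · intro _; exact Submonoid.one_mem H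
        · intro h1
          exact (not_comm_and_anti hMinv (hunit 1 (Submonoid.one_mem G)) (by simp) h1).elim
    | mul x y hx hy ihx ihy =>
        have hsx := sign_of_elem hM x hx
        have hsy := sign_of_elem hM y hy
        have hxyG : x * y ∈ G := Submonoid.mul_mem G hx hy
        rcases hsx with h1 | h1 <;> rcases hsy with h2 | h2
        · have hc : M * (x * y) = (x * y) * M := by
            rw [← mul_assoc, h1, mul_assoc, h2, mul_assoc]
          refine ⟨fun _ => Submonoid.mul_mem H (ihx.1 h1) (ihy.1 h2), fun ha => ?_⟩
          exact (not_comm_and_anti hMinv (hunit _ hxyG) hc ha).elim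
        · have ha : M * (x * y) = -((x * y) * M) := by
            rw [← mul_assoc, h1, mul_assoc, h2, mul_neg, mul_assoc]
          refine ⟨fun hc => (not_comm_and_anti hMinv (hunit _ hxyG) hc ha).elim, fun _ => ?_⟩
          rw [mul_assoc]
          exact Submonoid.mul_mem H (ihx.1 h1) (ihy.2 h2)
        · have ha : M * (x * y) = -((x * y) * M) := by
            rw [← mul_assoc, h1, neg_mul, mul_assoc, h2, mul_assoc]
          refine ⟨fun hc => (not_comm_and_anti hMinv (hunit _ hxyG) hc ha).elim, fun _ => ?_⟩
          have : x * y * s k = (x * s k) * y := by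
            calc x * y * s k = x * (y * s k) := by rw [mul_assoc]
              _ = x * (s k * y) := by rw [hcommk y hy]
              _ = (x * s k) * y := by rw [mul_assoc]
          rw [this]
          exact Submonoid.mul_mem H (ihx.2 h1) (ihy.1 h2)
        · have hc : M * (x * y) = (x * y) * M := by
            rw [← mul_assoc, h1, neg_mul, mul_assoc, h2, mul_neg, neg_neg, mul_assoc]
          refine ⟨fun _ => ?_, fun ha => (not_comm_and_anti hMinv (hunit _ hxyG) hc ha).elim⟩
          have hxy : x * y = (x * s k) * (y * s k) := by
            calc x * y = x * 1 * y := by rw [mul_one]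
              _ = x * (s k * s k) * y := by rw [hinv]
              _ = x * s k * (s k * y) := by
                    rw [← mul_assoc x (s k) (s k), mul_assoc (x * s k) (s k) y]
              _ = (x * s k) * (y * s k) := by rw [hcommk y hy]
          rw [hxy]
          exact Submonoid.mul_mem H (ihx.2 h1) (ihy.2 h2)
  have hcond : ¬ ∀ g ∈ G, M * g = g * M := fun hall => hk (hall (s k) hskG)
  rw [Meas, if_neg hcond]
  apply le_antisymm
  · rw [Submonoid.closure_le]
    rintro x (⟨hxG, hxc⟩ | hx)
    · exact (main x hxG).1 hxc
    · simp only [Set.mem_singleton_iff] at hx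
      subst hx
      have : s' k = ε • M := by rw [hs', updFam]; simp
      rw [← this]
      exact Submonoid.subset_closure ⟨k, rfl⟩
  · rw [Submonoid.closure_le]
    rintro x ⟨t, rfl⟩
    show s' t ∈ _
    by_cases htk : t = k
    · subst htk
      have : s' t = ε • M := by rw [hs', updFam]; simp
      rw [this]
      exact Submonoid.subset_closure (Set.mem_union_right _ rfl)
    · by_cases hcm : M * s t = s t * M
      · have : s' t = s t := by rw [hs', updFam]; simp [htk, hcm]
        rw [this]
        exact Submonoid.subset_closure (Set.mem_union_left _
          ⟨Submonoid.subset_closure ⟨t, rfl⟩, hcm⟩)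
      · have heq : s' t = s t * s k := by rw [hs', updFam]; simp [htk, hcm]
        have hat : M * s t = -(s t * M) := (hM t).resolve_left hcm
        have hcomm' : M * (s t * s k) = (s t * s k) * M := by
          rw [← mul_assoc, hat, neg_mul, mul_assoc, hka, mul_neg, neg_neg, mul_assoc]
        rw [heq]
        exact Submonoid.subset_closure (Set.mem_union_left _
          ⟨Submonoid.mul_mem _ (Submonoid.subset_closure ⟨t, rfl⟩)
            (Submonoid.subset_closure ⟨k, rfl⟩), hcomm'⟩)

lemma new_comm {s : Fin n → Op ι} {M : Op ι} {ε : ℂ}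
    (hcomm : ∀ t u, s t * s u = s u * s t)
    (hM : ∀ t, M * s t = s t * M ∨ M * s t = -(s t * M))
    (k : Fin n) (hk : ¬ (M * s k = s k * M)) :
    ∀ t u, updFam s M ε k t * updFam s M ε k u = updFam s M ε k u * updFam s M ε k t := by
  have hka : M * s k = -(s k * M) := (hM k).resolve_left hk
  have hc : ∀ t u, Commute (s t) (s u) := hcomm
  -- M commutes with every non-pivot updated generator
  have key : ∀ t, M * (if M * s t = s t * M then s t else s t * s k) =
      (if M * s t = s t * M then s t else s t * s k) * M := by
    intro t
    by_cases hcm : M * s t = s t * M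
    · simpa [hcm] using hcm
    · have hat : M * s t = -(s t * M) := (hM t).resolve_left hcm
      simp only [if_neg hcm]
      rw [← mul_assoc, hat, neg_mul, mul_assoc, hka, mul_neg, neg_neg, mul_assoc]
  intro t u
  unfold updFam
  by_cases htk : t = k <;> by_cases huk : u = k
  · subst htk; subst huk; simp
  · subst htk
    simp only [if_pos rfl, if_neg huk, if_true, ite_true]
    rw [smul_mul_assoc, mul_smul_comm, key u]
  · subst huk
    simp only [if_pos rfl, if_neg htk, if_true, ite_true]
    rw [mul_smul_comm, smul_mul_assoc, key t]
  · simp only [if_neg htk, if_neg huk]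
    by_cases h1 : M * s t = s t * M <;> by_cases h2 : M * s u = s u * M
    · rw [if_pos h1, if_pos h2]; exact hcomm t u
    · rw [if_pos h1, if_neg h2]; exact ((hc t u).mul_right (hc t k)).eq
    · rw [if_neg h1, if_pos h2]; exact ((hc t u).mul_left (hc k u)).eq
    · rw [if_neg h1, if_neg h2]
      exact (((hc t u).mul_right (hc t k)).mul_left ((hc k u).mul_right (hc k k))).eq

/- ## Part 3a: smul-Pauli algebra -/

lemma fin2_ne_iff {x y : Fin 2} : x ≠ y ↔ x + y = 1 := by revert x y; decide

lemma fin2_eq_iff {x y : Fin 2} : x = y ↔ x + y = 0 := by revert x y; decide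

lemma pm_mul {a b : ℂ} (ha : a = 1 ∨ a = -1) (hb : b = 1 ∨ b = -1) :
    a * b = 1 ∨ a * b = -1 := by
  rcases ha with rfl | rfl <;> rcases hb with rfl | rfl <;> norm_num

lemma pm_ne_zero {a : ℂ} (ha : a = 1 ∨ a = -1) : a ≠ 0 := by
  rcases ha with rfl | rfl <;> norm_num

lemma smul_Pau_mul (c d : ℂ) (a b a' b' : ι → Fin 2) :
    (c • Pau a b) * (d • Pau a' b') = (c * d * sgn (ip b a')) • Pau (a + a') (b + b') := by
  rw [smul_mul_assoc, mul_smul_comm, Pau_mul, smul_smul, smul_smul, mul_assoc]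

lemma smul_Pau_comm_iff {c d : ℂ} (hc : c ≠ 0) (hd : d ≠ 0) (a b a' b' : ι → Fin 2) :
    (c • Pau a b) * (d • Pau a' b') = (d • Pau a' b') * (c • Pau a b) ↔ ip b a' = ip b' a := by
  rw [smul_Pau_mul, smul_Pau_mul, add_comm a' a, add_comm b' b]
  constructor
  · intro h
    have h2 := Pau_smul_inj h
    have h3 : sgn (ip b a') = sgn (ip b' a) := by
      rw [mul_comm d c] at h2
      exact mul_left_cancel₀ (mul_ne_zero hc hd) h2
    exact sgn_inj h3
  · intro h
    rw [h]
    ring_nf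

lemma smul_Pau_anti {c d : ℂ} (a b a' b' : ι → Fin 2) (h : ip b a' ≠ ip b' a) :
    (c • Pau a b) * (d • Pau a' b') = -((d • Pau a' b') * (c • Pau a b)) := by
  rw [smul_Pau_mul, smul_Pau_mul, add_comm a' a, add_comm b' b, ← neg_smul]
  congr 1
  have hs : sgn (ip b a') = -sgn (ip b' a) := by
    rcases fin2_eq_zero_or_one (ip b a') with h1 | h1 <;>
      rcases fin2_eq_zero_or_one (ip b' a) with h2 | h2 <;>
        rw [h1, h2] <;> simp_all [sgn]
  rw [hs]
  ring

lemma Pau_comm_iff {d : ℂ} (hd : d ≠ 0) (a b a' b' : ι → Fin 2) :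
    Pau a b * (d • Pau a' b') = (d • Pau a' b') * Pau a b ↔ ip b a' = ip b' a := by
  have := smul_Pau_comm_iff (c := (1 : ℂ)) one_ne_zero hd a b a' b'
  simpa using this

lemma Pau_sign_cases {d : ℂ} (hd : d ≠ 0) (a b a' b' : ι → Fin 2) :
    Pau a b * (d • Pau a' b') = (d • Pau a' b') * Pau a b ∨
      Pau a b * (d • Pau a' b') = -((d • Pau a' b') * Pau a b) := by
  by_cases h : ip b a' = ip b' a
  · left; exact (Pau_comm_iff hd a b a' b').mpr h
  · right
    have := smul_Pau_anti (c := (1 : ℂ)) (d := d) a b a' b' h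
    simpa using this

lemma smul_Pau_sq {c : ℂ} (hc : c = 1 ∨ c = -1) (a b : ι → Fin 2) (h : ip b a = 0) :
    (c • Pau a b) * (c • Pau a b) = 1 := by
  rw [smul_Pau_mul, pi2_add_self, pi2_add_self, Pau_zero, h, sgn_zero]
  rcases hc with rfl | rfl <;> norm_num


/- ## Part 3b: string vectors and labels -/

variable {N : ℕ}

def vecZ (N p q : ℕ) : Fin N → Fin 2 :=
  fun i => if p ≤ lbl i ∧ lbl i ≤ q ∧ lbl i % 2 = p % 2 then 1 else 0

def vecX (N p q : ℕ) : Fin N → Fin 2 :=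
  fun i => if lbl i = p ∨ lbl i = q then 1 else 0

def vecG (N p q : ℕ) : Fin N → Fin 2 :=
  fun i => if p < lbl i ∧ lbl i < q ∧ ¬(lbl i % 2 = p % 2) then 1 else 0

def avOf (N p q : ℕ) (κ : Bool) : Fin N → Fin 2 := if κ then vecX N p q else 0

def bvOf (N p q : ℕ) (κ : Bool) : Fin N → Fin 2 := if κ then vecG N p q else vecZ N p q

def strOf (N p q : ℕ) (κ : Bool) : Op (Fin N) := Pau (avOf N p q κ) (bvOf N p q κ)

def wfP (N p q : ℕ) (κ : Bool) : Prop :=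
  1 ≤ p ∧ q ≤ N ∧ p % 2 = q % 2 ∧ (if κ then p < q else p ≤ q)

lemma ZStr_eq (p q : ℕ) : ZStr N p q = strOf N p q false := by
  rw [ZStr, ZProd_eq, strOf]
  show _ = Pau 0 (vecZ N p q)
  rw [Pau_zero_left]
  rfl

lemma GStr_eq (p q : ℕ) : GStr N p q = strOf N p q true := by
  rw [GStr, ZProd_eq, XProd_eq, strOf]
  rfl

lemma lbl_pos (j : Fin N) : 1 ≤ lbl j := by simp [lbl]

lemma lbl_le (j : Fin N) : lbl j ≤ N := by
  have := j.isLt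
  simp [lbl]

lemma lbl_inj {j j' : Fin N} (h : lbl j = lbl j') : j = j' := by
  apply Fin.ext
  simpa [lbl] using h

def site (N m : ℕ) (h1 : 1 ≤ m) (h2 : m ≤ N) : Fin N := ⟨m - 1, by omega⟩

lemma lbl_site {m : ℕ} (h1 : 1 ≤ m) (h2 : m ≤ N) : lbl (site N m h1 h2) = m := by
  simp [lbl, site]; omega

lemma ip_single_left (j₀ : Fin N) (v : Fin N → Fin 2) :
    ip (Pi.single j₀ 1) v = v j₀ := by
  rw [ip, Finset.sum_eq_single j₀]
  · simp
  · intro j _ hj; simp [Pi.single_apply, hj]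
  · simp

lemma ip_single_right (j₀ : Fin N) (v : Fin N → Fin 2) :
    ip v (Pi.single j₀ 1) = v j₀ := by
  rw [ip_comm, ip_single_left]

lemma vecZ_single {i : ℕ} (h1 : 1 ≤ i) (h2 : i ≤ N) :
    vecZ N i i = Pi.single (site N i h1 h2) 1 := by
  funext j
  rw [vecZ, Pi.single_apply]
  by_cases hj : j = site N i h1 h2
  · subst hj
    rw [if_pos rfl, if_pos]
    rw [lbl_site]
    omega
  · rw [if_neg hj, if_neg]
    intro ⟨ha, hb, _⟩
    exact hj (lbl_inj (by rw [lbl_site h1 h2]; omega))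

lemma vecG_single {i : ℕ} (h1 : 2 ≤ i) (h2 : i ≤ N) :
    vecG N (i - 1) (i + 1) = Pi.single (site N i (by omega) h2) 1 := by
  funext j
  rw [vecG, Pi.single_apply]
  by_cases hj : j = site N i (by omega) h2
  · subst hj
    rw [if_pos rfl, if_pos]
    rw [lbl_site]
    omega
  · rw [if_neg hj, if_neg]
    intro ⟨ha, hb, _⟩
    refine hj (lbl_inj ?_)
    rw [lbl_site (by omega : 1 ≤ i) h2]
    omega

lemma vecX_split {p q : ℕ} (h1 : 1 ≤ p) (h2 : p ≤ N) (h3 : 1 ≤ q) (h4 : q ≤ N)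
    (hne : p ≠ q) :
    vecX N p q = Pi.single (site N p h1 h2) 1 + Pi.single (site N q h3 h4) 1 := by
  funext j
  rw [vecX, Pi.add_apply, Pi.single_apply, Pi.single_apply]
  by_cases hp : lbl j = p
  · have : j = site N p h1 h2 := lbl_inj (by rw [lbl_site]; exact hp)
    rw [if_pos (Or.inl hp), if_pos this, if_neg]
    · rfl
    · intro hq
      exact hne (by rw [← hp, ← lbl_site h3 h4, hq])
  · by_cases hq : lbl j = q
    · have : j = site N q h3 h4 := lbl_inj (by rw [lbl_site]; exact hq)
      rw [if_pos (Or.inr hq), if_neg, if_pos this]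
      · rfl
      · intro hp'
        exact hp (by rw [← lbl_site h1 h2, hp'])
    · rw [if_neg (by tauto), if_neg, if_neg]
      · rfl
      · intro hq'
        exact hq (by rw [← lbl_site h3 h4, hq'])
      · intro hp'
        exact hp (by rw [← lbl_site h1 h2, hp'])

/-- the `a`/`b` vectors of a well-formed string pair orthogonally: strings are involutions -/
lemma ip_bv_av {p q : ℕ} {κ : Bool} (hw : wfP N p q κ) :
    ip (bvOf N p q κ) (avOf N p q κ) = 0 := by
  obtain ⟨h1, h2, h3, h4⟩ := hw
  cases κ
  · simp [avOf, ip_zero_right]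
  · simp only [avOf, bvOf, if_true]
    simp only [if_pos] at h4
    have hq1 : 1 ≤ q := by omega
    have hp2 : p ≤ N := by omega
    rw [vecX_split h1 hp2 hq1 h2 (by omega), ip_add_right, ip_single_right, ip_single_right,
      vecG, vecG]
    rw [lbl_site, lbl_site]
    rw [if_neg (by omega), if_neg (by omega)]
    rfl


/- ## Part 3c: merge identities -/

lemma arc_merge {p q p' q' i o o' : ℕ}
    (hw : 1 ≤ p ∧ q ≤ N ∧ p % 2 = q % 2 ∧ p < q)
    (hw' : 1 ≤ p' ∧ q' ≤ N ∧ p' % 2 = q' % 2 ∧ p' < q')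
    (hd : (p = i ∧ q = o) ∨ (p = o ∧ q = i))
    (hd' : (p' = i ∧ q' = o') ∨ (p' = o' ∧ q' = i))
    (hoo : o < o') :
    (1 ≤ o ∧ o' ≤ N ∧ o % 2 = o' % 2 ∧ o < o') ∧
      vecX N p q + vecX N p' q' = vecX N o o' ∧
      vecG N p q + vecG N p' q' = vecG N o o' := by
  refine ⟨by omega, ?_, ?_⟩ <;>
    · funext j
      simp only [vecX, vecG, Pi.add_apply]
      split_ifs <;> first | decide | (exfalso; omega)

lemma zmerge_mixed {p q p' q' : ℕ}
    (hw : 1 ≤ p ∧ q ≤ N ∧ p % 2 = q % 2 ∧ p ≤ q)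
    (hw' : 1 ≤ p' ∧ q' ≤ N ∧ p' % 2 = q' % 2 ∧ p' ≤ q')
    (hadj : p' = q + 2) :
    (1 ≤ p ∧ q' ≤ N ∧ p % 2 = q' % 2 ∧ p ≤ q') ∧
      vecZ N p q + vecZ N p' q' = vecZ N p q' := by
  refine ⟨by omega, ?_⟩
  funext j
  simp only [vecZ, Pi.add_apply]
  split_ifs <;> first | decide | (exfalso; omega)

lemma zmerge_left {p q p' : ℕ}
    (hw : 1 ≤ p ∧ q ≤ N ∧ p % 2 = q % 2 ∧ p ≤ q)
    (hw' : 1 ≤ p' ∧ q ≤ N ∧ p' % 2 = q % 2 ∧ p' ≤ q)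
    (hpp : p < p') :
    (1 ≤ p ∧ p' - 2 ≤ N ∧ p % 2 = (p' - 2) % 2 ∧ p ≤ p' - 2) ∧
      vecZ N p q + vecZ N p' q = vecZ N p (p' - 2) := by
  refine ⟨by omega, ?_⟩
  funext j
  simp only [vecZ, Pi.add_apply]
  split_ifs <;> first | decide | (exfalso; omega)

lemma zmerge_right {p q q' : ℕ}
    (hw : 1 ≤ p ∧ q ≤ N ∧ p % 2 = q % 2 ∧ p ≤ q)
    (hw' : 1 ≤ p ∧ q' ≤ N ∧ p % 2 = q' % 2 ∧ p ≤ q')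
    (hqq : q < q') :
    (1 ≤ q + 2 ∧ q' ≤ N ∧ (q + 2) % 2 = q' % 2 ∧ q + 2 ≤ q') ∧
      vecZ N p q + vecZ N p q' = vecZ N (q + 2) q' := by
  refine ⟨by omega, ?_⟩
  funext j
  simp only [vecZ, Pi.add_apply]
  split_ifs <;> first | decide | (exfalso; omega)

/-- a `G`-string generator always commutes with a measured cluster operator `g_i` -/
lemma gstr_comm_gi {p q i : ℕ} (hw : wfP N p q true) (h2i : 2 ≤ i) (hiN : i ≤ N) :
    ip (Pi.single (site N i (by omega) hiN) 1) (vecX N p q) +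
      ip (vecG N p q) (vecX N (i - 1) (i + 1)) = 0 := by
  obtain ⟨h1, h2, h3, h4⟩ := hw
  simp only [if_pos] at h4
  by_cases hiN1 : i + 1 ≤ N
  · have him : 1 ≤ i - 1 := by omega
    have hiM : i - 1 ≤ N := by omega
    have h1p : 1 ≤ i + 1 := by omega
    rw [vecX_split him hiM h1p hiN1 (by omega), ip_add_right, ip_single_left,
      ip_single_right, ip_single_right, vecX, vecG, vecG, lbl_site, lbl_site, lbl_site]
    split_ifs <;> first | decide | (exfalso; omega)
  · -- i = N, so the X site i+1 is off the chain: vecX N (i-1) (i+1) hits only site i-1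
    have him : 1 ≤ i - 1 := by omega
    have hiM : i - 1 ≤ N := by omega
    have hsplit : vecX N (i - 1) (i + 1) = Pi.single (site N (i - 1) him hiM) 1 := by
      funext j
      rw [vecX, Pi.single_apply]
      by_cases hj : j = site N (i - 1) him hiM
      · subst hj; rw [lbl_site]; simp
      · rw [if_neg, if_neg hj]
        have hjl := lbl_le j
        intro hc
        rcases hc with hc | hc
        · exact hj (lbl_inj (by rw [lbl_site]; exact hc))
        · omega
    rw [hsplit, ip_single_left, ip_single_right, vecX, vecG, lbl_site, lbl_site]
    split_ifs <;> first | decide | (exfalso; omega)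


/- ## Part 3d: independence update -/

lemma nsmul_pi2 (m : ℕ) (v : Fin N → Fin 2) :
    m • v = if Even m then 0 else v := by
  rcases Nat.even_or_odd m with h | h
  · rw [if_pos h]
    obtain ⟨c, rfl⟩ := h
    rw [add_nsmul]
    exact pi2_add_self _
  · rw [if_neg (Nat.not_even_iff_odd.mpr h)]
    obtain ⟨c, rfl⟩ := h
    rw [add_nsmul, one_nsmul, two_mul, add_nsmul]
    rw [pi2_add_self, zero_add]

def cIte {α : Sort*} (P : Prop) (x y : α) : α := @ite _ P (Classical.propDecidable P) x y

lemma cIte_pos {α : Sort*} {P : Prop} (h : P) (x y : α) : cIte P x y = x := by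
  rw [cIte, if_pos h]

lemma cIte_neg {α : Sort*} {P : Prop} (h : ¬P) (x y : α) : cIte P x y = y := by
  rw [cIte, if_neg h]

lemma indep_update (av bv : Fin N → Fin N → Fin 2) (aM bM : Fin N → Fin 2) (k : Fin N)
    (C : Fin N → Prop)
    (hsym : ∀ t u, ip (bv t) (av u) = ip (bv u) (av t))
    (hanti : ip bM (av k) + ip (bv k) aM = 1)
    (hold : ∀ T : Finset (Fin N), ∑ t ∈ T, av t = 0 → ∑ t ∈ T, bv t = 0 → T = ∅) :
    ∀ T : Finset (Fin N),
      ∑ t ∈ T, (cIte (t = k) aM (cIte (C t) (av t) (av t + av k))) = 0 →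
      ∑ t ∈ T, (cIte (t = k) bM (cIte (C t) (bv t) (bv t + bv k))) = 0 → T = ∅ := by
  classical
  intro T hA hB
  set AV := fun t => cIte (t = k) aM (cIte (C t) (av t) (av t + av k)) with hAV
  set BV := fun t => cIte (t = k) bM (cIte (C t) (bv t) (bv t + bv k)) with hBV
  have hknT : k ∉ T := by
    intro hkT
    have hphi : ∑ t ∈ T, (ip (BV t) (av k) + ip (bv k) (AV t)) = 0 := by
      rw [Finset.sum_add_distrib, ← ip_sum_left T BV (av k)]
      have h2 : ∑ t ∈ T, ip (bv k) (AV t) = ip (bv k) (∑ t ∈ T, AV t) := by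
        rw [Finset.sum_congr rfl fun t _ => ip_comm (bv k) (AV t),
          ← ip_sum_left T AV (bv k), ip_comm]
      rw [h2, hA, hB, ip_zero_left, ip_zero_right, add_zero]
    have hone : ∑ t ∈ T, (ip (BV t) (av k) + ip (bv k) (AV t)) = 1 := by
      rw [Finset.sum_eq_single_of_mem k hkT]
      · simp only [hAV, hBV, cIte_pos rfl]
        exact hanti
      · intro t htT htk
        simp only [hAV, hBV, cIte_neg htk]
        by_cases hc : C t
        · rw [cIte_pos hc, cIte_pos hc, hsym t k]
          exact fin2_add_self _
        · rw [cIte_neg hc, cIte_neg hc, ip_add_left, ip_add_right, hsym t k]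
          have : ∀ x y z : Fin 2, x + y + (x + z) = y + z := by decide
          rw [this]
          exact fin2_add_self _
    rw [hphi] at hone
    exact absurd hone (by decide)
  -- now k ∉ T
  have hsplitA : ∑ t ∈ T, AV t = ∑ t ∈ T, av t +
      ((T.filter fun t => ¬ C t).card • av k) := by
    have : ∀ t ∈ T, AV t = av t + (if C t then 0 else av k) := by
      intro t htT
      have htk : t ≠ k := by rintro rfl; exact hknT htT
      simp only [hAV, cIte_neg htk]
      by_cases hc : C t
      · rw [cIte_pos hc, if_pos hc, add_zero]
      · rw [cIte_neg hc, if_neg hc]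
    rw [Finset.sum_congr rfl this, Finset.sum_add_distrib]
    congr 1
    rw [Finset.sum_ite, Finset.sum_const_zero, zero_add, Finset.sum_const]
  have hsplitB : ∑ t ∈ T, BV t = ∑ t ∈ T, bv t +
      ((T.filter fun t => ¬ C t).card • bv k) := by
    have : ∀ t ∈ T, BV t = bv t + (if C t then 0 else bv k) := by
      intro t htT
      have htk : t ≠ k := by rintro rfl; exact hknT htT
      simp only [hBV, cIte_neg htk]
      by_cases hc : C t
      · rw [cIte_pos hc, if_pos hc, add_zero]
      · rw [cIte_neg hc, if_neg hc]
    rw [Finset.sum_congr rfl this, Finset.sum_add_distrib]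
    congr 1
    rw [Finset.sum_ite, Finset.sum_const_zero, zero_add, Finset.sum_const]
  set m := (T.filter fun t => ¬ C t).card with hm
  rw [hsplitA, nsmul_pi2] at hA
  rw [hsplitB, nsmul_pi2] at hB
  by_cases hev : Even m
  · rw [if_pos hev, add_zero] at hA hB
    exact hold T hA hB
  · rw [if_neg hev] at hA hB
    have hA' : ∑ t ∈ insert k T, av t = 0 := by
      rw [Finset.sum_insert hknT, add_comm]
      exact hA
    have hB' : ∑ t ∈ insert k T, bv t = 0 := by
      rw [Finset.sum_insert hknT, add_comm]
      exact hB
    have := hold _ hA' hB'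
    exact absurd this (Finset.insert_ne_empty _ _)


/- ## Part 3e: the invariant and the core step lemma -/

def famS (N : ℕ) (e : Fin N → ℂ) (pp qq : Fin N → ℕ) (κ : Fin N → Bool) :
    Fin N → Op (Fin N) :=
  fun t => e t • Pau (avOf N (pp t) (qq t) (κ t)) (bvOf N (pp t) (qq t) (κ t))

def GoodG {N : ℕ} (G : Submonoid (Op (Fin N))) : Prop :=
  ∃ (e : Fin N → ℂ) (pp qq : Fin N → ℕ) (κ : Fin N → Bool),
    (∀ t, e t = 1 ∨ e t = -1) ∧
    (∀ t, wfP N (pp t) (qq t) (κ t)) ∧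
    (∀ t u, famS N e pp qq κ t * famS N e pp qq κ u =
      famS N e pp qq κ u * famS N e pp qq κ t) ∧
    (∀ T : Finset (Fin N), ∑ t ∈ T, avOf N (pp t) (qq t) (κ t) = 0 →
      ∑ t ∈ T, bvOf N (pp t) (qq t) (κ t) = 0 → T = ∅) ∧
    G = Submonoid.closure (Set.range (famS N e pp qq κ))

set_option maxHeartbeats 2000000 in
lemma good_step_core (e : Fin N → ℂ) (pp qq : Fin N → ℕ) (κ : Fin N → Bool)
    (aM bM : Fin N → Fin 2) (ε : ℂ) (hε : ε = 1 ∨ ε = -1)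
    (hE : ∀ t, e t = 1 ∨ e t = -1)
    (hW : ∀ t, wfP N (pp t) (qq t) (κ t))
    (hC : ∀ t u, famS N e pp qq κ t * famS N e pp qq κ u =
      famS N e pp qq κ u * famS N e pp qq κ t)
    (hI : ∀ T : Finset (Fin N), ∑ t ∈ T, avOf N (pp t) (qq t) (κ t) = 0 →
      ∑ t ∈ T, bvOf N (pp t) (qq t) (κ t) = 0 → T = ∅)
    (hMip : ip bM aM = 0)
    (hMform : ∃ r r' κ₀, wfP N r r' κ₀ ∧ avOf N r r' κ₀ = aM ∧ bvOf N r r' κ₀ = bM)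
    (hMk : ∀ t u, t ≠ u →
      ip bM (avOf N (pp t) (qq t) (κ t)) ≠ ip (bvOf N (pp t) (qq t) (κ t)) aM →
      ip bM (avOf N (pp u) (qq u) (κ u)) ≠ ip (bvOf N (pp u) (qq u) (κ u)) aM →
      ¬(avOf N (pp t) (qq t) (κ t) = avOf N (pp u) (qq u) (κ u) ∧
        bvOf N (pp t) (qq t) (κ t) = bvOf N (pp u) (qq u) (κ u)) →
      ∃ r r' κ₀, wfP N r r' κ₀ ∧
        avOf N r r' κ₀ = avOf N (pp t) (qq t) (κ t) + avOf N (pp u) (qq u) (κ u) ∧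
        bvOf N r r' κ₀ = bvOf N (pp t) (qq t) (κ t) + bvOf N (pp u) (qq u) (κ u)) :
    GoodG (Meas (Submonoid.closure (Set.range (famS N e pp qq κ))) (Pau aM bM) ε) := by
  classical
  set s := famS N e pp qq κ with hs
  set av := fun t => avOf N (pp t) (qq t) (κ t) with hav
  set bv := fun t => bvOf N (pp t) (qq t) (κ t) with hbv
  have hsdef : ∀ t, s t = e t • Pau (av t) (bv t) := fun t => rfl
  have hinv : ∀ t, s t * s t = 1 := fun t => smul_Pau_sq (hE t) _ _ (ip_bv_av (hW t))
  have hM : ∀ t, Pau aM bM * s t = s t * Pau aM bM ∨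
      Pau aM bM * s t = -(s t * Pau aM bM) := fun t =>
    Pau_sign_cases (pm_ne_zero (hE t)) aM bM (av t) (bv t)
  have hMinv : Pau aM bM * Pau aM bM = 1 := by
    rw [Pau_sq, hMip, sgn_zero, one_smul]
  by_cases hall : ∀ t, Pau aM bM * s t = s t * Pau aM bM
  · rw [meas_of_all_comm hall]
    exact ⟨e, pp, qq, κ, hE, hW, hC, hI, rfl⟩
  · push_neg at hall
    obtain ⟨k, hk⟩ := hall
    rw [meas_update hC hinv hM hMinv k hk]
    have hkanti : ip bM (av k) ≠ ip (bv k) aM := by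
      intro h
      exact hk ((Pau_comm_iff (pm_ne_zero (hE k)) aM bM (av k) (bv k)).mpr h)
    have Ex : ∀ t, ∃ (e₀ : ℂ) (r r' : ℕ) (κ₀ : Bool),
        (e₀ = 1 ∨ e₀ = -1) ∧ wfP N r r' κ₀ ∧
        updFam s (Pau aM bM) ε k t = e₀ • Pau (avOf N r r' κ₀) (bvOf N r r' κ₀) ∧
        avOf N r r' κ₀ = cIte (t = k) aM
          (cIte (Pau aM bM * s t = s t * Pau aM bM) (av t) (av t + av k)) ∧
        bvOf N r r' κ₀ = cIte (t = k) bM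
          (cIte (Pau aM bM * s t = s t * Pau aM bM) (bv t) (bv t + bv k)) := by
      intro t
      by_cases htk : t = k
      · subst htk
        obtain ⟨r, r', κ₀, hw0, ha0, hb0⟩ := hMform
        refine ⟨ε, r, r', κ₀, hε, hw0, ?_, by rw [cIte_pos rfl]; exact ha0,
          by rw [cIte_pos rfl]; exact hb0⟩
        rw [ha0, hb0]
        simp [updFam]
      · by_cases hcm : Pau aM bM * s t = s t * Pau aM bM
        · refine ⟨e t, pp t, qq t, κ t, hE t, hW t, ?_,
            by rw [cIte_neg htk, cIte_pos hcm],
            by rw [cIte_neg htk, cIte_pos hcm]⟩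
          simp only [updFam, if_neg htk, if_pos hcm]
          exact hsdef t
        · have hat : ip bM (av t) ≠ ip (bv t) aM := by
            intro h
            exact hcm ((Pau_comm_iff (pm_ne_zero (hE t)) aM bM (av t) (bv t)).mpr h)
          have hvne : ¬(av t = av k ∧ bv t = bv k) := by
            rintro ⟨h1, h2⟩
            have hsum : ∑ u ∈ ({t, k} : Finset (Fin N)), av u = 0 := by
              rw [Finset.sum_pair htk, h1]
              exact pi2_add_self _
            have hsum' : ∑ u ∈ ({t, k} : Finset (Fin N)), bv u = 0 := by
              rw [Finset.sum_pair htk, h2]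
              exact pi2_add_self _
            have := hI _ hsum hsum'
            exact absurd this (Finset.insert_ne_empty _ _)
          obtain ⟨r, r', κ₀, hw0, ha0, hb0⟩ := hMk t k htk hat hkanti hvne
          refine ⟨e t * e k * sgn (ip (bv t) (av k)), r, r', κ₀,
            pm_mul (pm_mul (hE t) (hE k)) (sgn_cases _), hw0, ?_,
            by rw [cIte_neg htk, cIte_neg hcm]; exact ha0,
            by rw [cIte_neg htk, cIte_neg hcm]; exact hb0⟩
          rw [updFam]
          simp only [if_neg htk, if_neg hcm]
          rw [hsdef t, hsdef k, smul_Pau_mul, ha0, hb0]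
    choose e' rr rr' κ' hE' hW' hS hA' hB' using Ex
    have hfun : updFam s (Pau aM bM) ε k = famS N e' rr rr' κ' := funext fun t => hS t
    refine ⟨e', rr, rr', κ', hE', hW', ?_, ?_, by rw [hfun]⟩
    · intro t u
      rw [← hfun]
      exact new_comm hC hM k hk t u
    · intro T hTa hTb
      have hsym : ∀ t u, ip (bv t) (av u) = ip (bv u) (av t) := by
        intro t u
        exact (smul_Pau_comm_iff (pm_ne_zero (hE t)) (pm_ne_zero (hE u))
          (av t) (bv t) (av u) (bv u)).mp (hC t u)
      have hanti1 : ip bM (av k) + ip (bv k) aM = 1 := fin2_ne_iff.mp hkanti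
      have hTa' : ∑ t ∈ T, cIte (t = k) aM
          (cIte (Pau aM bM * s t = s t * Pau aM bM) (av t) (av t + av k)) = 0 := by
        rw [← Finset.sum_congr rfl fun t _ => hA' t]
        exact hTa
      have hTb' : ∑ t ∈ T, cIte (t = k) bM
          (cIte (Pau aM bM * s t = s t * Pau aM bM) (bv t) (bv t + bv k)) = 0 := by
        rw [← Finset.sum_congr rfl fun t _ => hB' t]
        exact hTb
      exact indep_update av bv aM bM k
        (fun t => Pau aM bM * s t = s t * Pau aM bM) hsym hanti1 hI T hTa' hTb'


/- ## Part 3f: the two measurement steps -/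

lemma avOf_true (p q : ℕ) : avOf N p q true = vecX N p q := by simp [avOf]
lemma avOf_false (p q : ℕ) : avOf N p q false = 0 := by simp [avOf]
lemma bvOf_true (p q : ℕ) : bvOf N p q true = vecG N p q := by simp [bvOf]
lemma bvOf_false (p q : ℕ) : bvOf N p q false = vecZ N p q := by simp [bvOf]

lemma wfP_true (p q : ℕ) : wfP N p q true ↔ 1 ≤ p ∧ q ≤ N ∧ p % 2 = q % 2 ∧ p < q := by
  simp [wfP]

lemma wfP_false (p q : ℕ) : wfP N p q false ↔ 1 ≤ p ∧ q ≤ N ∧ p % 2 = q % 2 ∧ p ≤ q := by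
  simp [wfP]

lemma fin2_one_of_ne_zero {x : Fin 2} (h : x ≠ 0) : x = 1 := by
  rcases fin2_eq_zero_or_one x with h0 | h1
  · exact absurd h0 h
  · exact h1

lemma vecX_val_one {p q : ℕ} {j : Fin N} (h : vecX N p q j = 1) :
    lbl j = p ∨ lbl j = q := by
  rw [vecX] at h
  split_ifs at h with hc
  · exact hc
  · exact absurd h (by decide)

lemma step_Z {G : Submonoid (Op (Fin N))} (i₀ : Fin N) (ε : ℂ) (hε : ε = 1 ∨ ε = -1)
    (hGood : GoodG G) : GoodG (Meas G (PZ i₀) ε) := by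
  classical
  obtain ⟨e, pp, qq, κ, hE, hW, hC, hI, rfl⟩ := hGood
  have hMeq : PZ i₀ = Pau 0 (Pi.single i₀ 1) := by rw [PZ_eq, Pau_zero_left]
  rw [hMeq]
  have h1i : 1 ≤ lbl i₀ := lbl_pos i₀
  have hiN : lbl i₀ ≤ N := lbl_le i₀
  have hsite : site N (lbl i₀) h1i hiN = i₀ := lbl_inj (lbl_site h1i hiN)
  apply good_step_core e pp qq κ 0 (Pi.single i₀ 1) ε hε hE hW hC hI
  · exact ip_zero_right _
  · refine ⟨lbl i₀, lbl i₀, false, ?_, avOf_false _ _, ?_⟩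
    · rw [wfP_false]
      omega
    · rw [bvOf_false, vecZ_single h1i hiN, hsite]
  · intro t u htu hat hau hvne
    rw [ip_zero_right] at hat hau
    have hval : ∀ v : Fin N, ip (Pi.single i₀ 1) (avOf N (pp v) (qq v) (κ v)) ≠ 0 →
        κ v = true ∧ (lbl i₀ = pp v ∨ lbl i₀ = qq v) := by
      intro v hv
      rw [ip_single_left] at hv
      cases hκ : κ v
      · rw [hκ, avOf_false] at hv
        exact absurd rfl hv
      · rw [hκ, avOf_true] at hv
        exact ⟨rfl, vecX_val_one (fin2_one_of_ne_zero hv)⟩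
    obtain ⟨hκt, hit⟩ := hval t hat
    obtain ⟨hκu, hiu⟩ := hval u hau
    have hwt := hW t
    have hwu := hW u
    rw [hκt, wfP_true] at hwt
    rw [hκu, wfP_true] at hwu
    set i := lbl i₀ with hi
    set ot := if i = pp t then qq t else pp t with hot
    set ou := if i = pp u then qq u else pp u with hou
    have hdt : (pp t = i ∧ qq t = ot) ∨ (pp t = ot ∧ qq t = i) := by
      by_cases hc : i = pp t
      · left; rw [hot, if_pos hc]; exact ⟨hc.symm, rfl⟩
      · right; rw [hot, if_neg hc]; exact ⟨rfl, (hit.resolve_left hc).symm⟩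
    have hdu : (pp u = i ∧ qq u = ou) ∨ (pp u = ou ∧ qq u = ou) ∨ (pp u = ou ∧ qq u = i) := by
      by_cases hc : i = pp u
      · left; rw [hou, if_pos hc]; exact ⟨hc.symm, rfl⟩
      · right; right; rw [hou, if_neg hc]; exact ⟨rfl, (hiu.resolve_left hc).symm⟩
    have hdu' : (pp u = i ∧ qq u = ou) ∨ (pp u = ou ∧ qq u = i) := by
      rcases hdu with h | h | h
      · exact Or.inl h
      · exact absurd h (by omega)
      · exact Or.inr h
    have hne : ¬(pp t = pp u ∧ qq t = qq u) := by
      rintro ⟨h1, h2⟩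
      exact hvne (by rw [hκt, hκu, h1, h2]; exact ⟨rfl, rfl⟩)
    have hoo : ot ≠ ou := by
      intro h
      exact hne (by omega)
    rcases lt_or_gt_of_ne hoo with hlt | hgt
    · obtain ⟨hwf', hX, hG⟩ := arc_merge (N := N) hwt hwu hdt hdu' hlt
      refine ⟨ot, ou, true, (wfP_true _ _).mpr hwf', ?_, ?_⟩
      · rw [avOf_true, hκt, hκu, avOf_true, avOf_true]
        exact hX.symm
      · rw [bvOf_true, hκt, hκu, bvOf_true, bvOf_true]
        exact hG.symm
    · obtain ⟨hwf', hX, hG⟩ := arc_merge (N := N) hwu hwt hdu' hdt hgt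
      refine ⟨ou, ot, true, (wfP_true _ _).mpr hwf', ?_, ?_⟩
      · rw [avOf_true, hκt, hκu, avOf_true, avOf_true, add_comm]
        exact hX.symm
      · rw [bvOf_true, hκt, hκu, bvOf_true, bvOf_true, add_comm]
        exact hG.symm


lemma step_G {G : Submonoid (Op (Fin N))} (i : ℕ) (h2i : 2 ≤ i) (hiN1 : i ≤ N - 1)
    (ε : ℂ) (hε : ε = 1 ∨ ε = -1)
    (hGood : GoodG G) : GoodG (Meas G (GStr N (i - 1) (i + 1)) ε) := by
  classical
  obtain ⟨e, pp, qq, κ, hE, hW, hC, hI, rfl⟩ := hGood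
  have hN3 : 3 ≤ N := by omega
  have hiN : i ≤ N := by omega
  have hi1N : i + 1 ≤ N := by omega
  have him : (1 : ℕ) ≤ i - 1 := by omega
  have himN : i - 1 ≤ N := by omega
  have hwM : wfP N (i - 1) (i + 1) true := by
    rw [wfP_true]
    omega
  have hMeq : GStr N (i - 1) (i + 1) =
      Pau (vecX N (i - 1) (i + 1)) (vecG N (i - 1) (i + 1)) := by
    rw [GStr_eq, strOf, avOf_true, bvOf_true]
  rw [hMeq]
  have hbM : vecG N (i - 1) (i + 1) = Pi.single (site N i (by omega) hiN) 1 :=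
    vecG_single h2i hiN
  have haM : vecX N (i - 1) (i + 1) =
      Pi.single (site N (i - 1) him himN) 1 + Pi.single (site N (i + 1) (by omega) hi1N) 1 :=
    vecX_split him himN (by omega) hi1N (by omega)
  apply good_step_core e pp qq κ (vecX N (i - 1) (i + 1)) (vecG N (i - 1) (i + 1)) ε hε hE hW
    hC hI
  · have := ip_bv_av (N := N) hwM
    rwa [avOf_true, bvOf_true] at this
  · exact ⟨i - 1, i + 1, true, hwM, avOf_true _ _, bvOf_true _ _⟩
  · intro t u htu hat hau hvne
    have hchar : ∀ v : Fin N,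
        ip (vecG N (i - 1) (i + 1)) (avOf N (pp v) (qq v) (κ v)) ≠
          ip (bvOf N (pp v) (qq v) (κ v)) (vecX N (i - 1) (i + 1)) →
        κ v = false ∧ (qq v = i - 1 ∨ pp v = i + 1) := by
      intro v hv
      cases hκ : κ v
      · refine ⟨rfl, ?_⟩
        rw [hκ, avOf_false, bvOf_false, ip_zero_right] at hv
        have hwv := hW v
        rw [hκ, wfP_false] at hwv
        have hv2 : ip (vecZ N (pp v) (qq v)) (vecX N (i - 1) (i + 1)) = 1 :=
          fin2_one_of_ne_zero (fun h0 => hv (h0.symm ▸ rfl))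
        rw [haM, ip_add_right, ip_single_right, ip_single_right] at hv2
        rw [vecZ, vecZ, lbl_site, lbl_site] at hv2
        split_ifs at hv2 with hc1 hc2 hc2
        · exact absurd hv2 (by decide)
        · left; omega
        · right; omega
        · exact absurd hv2 (by decide)
      · exfalso
        apply hv
        rw [hκ, avOf_true, bvOf_true]
        have hwv := hW v
        rw [hκ] at hwv
        have hcomm := gstr_comm_gi (N := N) (p := pp v) (q := qq v) hwv h2i hiN
        rw [← hbM] at hcomm
        exact fin2_eq_iff.mpr hcomm
    obtain ⟨hκt, hst⟩ := hchar t hat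
    obtain ⟨hκu, hsu⟩ := hchar u hau
    have hwt := hW t
    have hwu := hW u
    rw [hκt, wfP_false] at hwt
    rw [hκu, wfP_false] at hwu
    have hne : ¬(pp t = pp u ∧ qq t = qq u) := by
      rintro ⟨h1, h2⟩
      exact hvne (by rw [hκt, hκu, h1, h2]; exact ⟨rfl, rfl⟩)
    have hgoal : ∃ r r' : ℕ,
        (1 ≤ r ∧ r' ≤ N ∧ r % 2 = r' % 2 ∧ r ≤ r') ∧
        vecZ N (pp t) (qq t) + vecZ N (pp u) (qq u) = vecZ N r r' := by
      rcases hst with hqt | hpt <;> rcases hsu with hqu | hpu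
      · -- both end at i - 1
        have hppne : pp t ≠ pp u := by omega
        have hqeq : vecZ N (pp u) (qq u) = vecZ N (pp u) (qq t) := by rw [hqu, ← hqt]
        rcases lt_or_gt_of_ne hppne with hlt | hgt
        · obtain ⟨hwf', hsum⟩ := zmerge_left (N := N) hwt (by omega : 1 ≤ pp u ∧
            qq t ≤ N ∧ pp u % 2 = qq t % 2 ∧ pp u ≤ qq t) hlt
          exact ⟨pp t, pp u - 2, hwf', by rw [hqeq]; exact hsum⟩
        · obtain ⟨hwf', hsum⟩ := zmerge_left (N := N) (by omega : 1 ≤ pp u ∧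
            qq t ≤ N ∧ pp u % 2 = qq t % 2 ∧ pp u ≤ qq t) hwt hgt
          exact ⟨pp u, pp t - 2, hwf', by rw [hqeq, add_comm]; exact hsum⟩
      · -- t ends at i - 1, u starts at i + 1
        obtain ⟨hwf', hsum⟩ := zmerge_mixed (N := N) hwt hwu (by omega)
        exact ⟨pp t, qq u, hwf', hsum⟩
      · -- t starts at i + 1, u ends at i - 1
        obtain ⟨hwf', hsum⟩ := zmerge_mixed (N := N) hwu hwt (by omega)
        exact ⟨pp u, qq t, hwf', by rw [add_comm]; exact hsum⟩
      · -- both start at i + 1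
        have hqqne : qq t ≠ qq u := by omega
        have hpeq : vecZ N (pp u) (qq u) = vecZ N (pp t) (qq u) := by rw [hpu, ← hpt]
        rcases lt_or_gt_of_ne hqqne with hlt | hgt
        · obtain ⟨hwf', hsum⟩ := zmerge_right (N := N) hwt (by omega : 1 ≤ pp t ∧
            qq u ≤ N ∧ pp t % 2 = qq u % 2 ∧ pp t ≤ qq u) hlt
          exact ⟨qq t + 2, qq u, hwf', by rw [hpeq]; exact hsum⟩
        · obtain ⟨hwf', hsum⟩ := zmerge_right (N := N) (by omega : 1 ≤ pp t ∧
            qq u ≤ N ∧ pp t % 2 = qq u % 2 ∧ pp t ≤ qq u) hwt hgt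
          exact ⟨qq u + 2, qq t, hwf', by rw [hpeq, add_comm]; exact hsum⟩
    obtain ⟨r, r', hwf', hsum⟩ := hgoal
    refine ⟨r, r', false, (wfP_false _ _).mpr hwf', ?_, ?_⟩
    · rw [avOf_false, hκt, hκu, avOf_false, avOf_false, add_zero]
    · rw [bvOf_false, hκt, hκu, bvOf_false, bvOf_false]
      exact hsum.symm


/- ## Part 4: assembly -/

lemma base_good :
    GoodG (N := N) (Submonoid.closure (Set.range (PZ : Fin N → Op (Fin N)))) := by
  classical
  refine ⟨fun _ => 1, fun t => lbl t, fun t => lbl t, fun _ => false, fun t => Or.inl rfl,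
    ?_, ?_, ?_, ?_⟩
  · intro t
    rw [wfP_false]
    exact ⟨lbl_pos t, lbl_le t, rfl, le_refl _⟩
  · intro t u
    refine (smul_Pau_comm_iff one_ne_zero one_ne_zero _ _ _ _).mpr ?_
    rw [avOf_false, avOf_false, ip_zero_right, ip_zero_right]
  · intro T hA hB
    by_contra hne
    obtain ⟨t₀, ht₀⟩ := Finset.nonempty_iff_ne_empty.mpr hne
    have key : ∀ v : Fin N, bvOf N (lbl v) (lbl v) false t₀ = if v = t₀ then 1 else 0 := by
      intro v
      rw [bvOf_false, vecZ]
      by_cases hc : v = t₀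
      · subst hc
        rw [if_pos ⟨le_refl _, le_refl _, rfl⟩, if_pos rfl]
      · rw [if_neg, if_neg hc]
        rintro ⟨h1, h2, _⟩
        exact hc (lbl_inj (show lbl v = lbl t₀ by omega))
    have h0 := congrFun hB t₀
    rw [Finset.sum_apply, Pi.zero_apply] at h0
    rw [Finset.sum_congr rfl (fun v _ => key v)] at h0
    rw [Finset.sum_ite_eq' T t₀ (fun _ => (1 : Fin 2))] at h0
    rw [if_pos ht₀] at h0
    exact absurd h0 (by decide)
  · have hfam : famS N (fun _ => 1) (fun t => lbl t) (fun t => lbl t) (fun _ => false) =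
        PZ := by
      funext t
      show (1 : ℂ) • Pau (avOf N (lbl t) (lbl t) false) (bvOf N (lbl t) (lbl t) false) = PZ t
      rw [one_smul, avOf_false, bvOf_false, vecZ_single (lbl_pos t) (lbl_le t),
        lbl_inj (lbl_site (lbl_pos t) (lbl_le t)), Pau_zero_left, ← PZ_eq]
    rw [hfam]


lemma step_any {G : Submonoid (Op (Fin N))} {M : Op (Fin N)} {ε : ℂ}
    (hm : (∃ i₀ : Fin N, M = PZ i₀) ∨
      (∃ i : ℕ, 2 ≤ i ∧ i ≤ N - 1 ∧ M = GStr N (i - 1) (i + 1)))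
    (hε : ε = 1 ∨ ε = -1)
    (h : GoodG G) : GoodG (Meas G M ε) := by
  rcases hm with ⟨i₀, rfl⟩ | ⟨i, h2i, hiN1, rfl⟩
  · exact step_Z i₀ ε hε h
  · exact step_G i h2i hiN1 ε hε h

lemma foldl_good (L : List (Op (Fin N) × ℂ))
    (hL : ∀ p ∈ L,
      ((∃ i : Fin N, p.1 = PZ i) ∨
        (∃ i : ℕ, 2 ≤ i ∧ i ≤ N - 1 ∧ p.1 = GStr N (i - 1) (i + 1))) ∧
      (p.2 = 1 ∨ p.2 = -1)) :
    ∀ G : Submonoid (Op (Fin N)), GoodG G →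
      GoodG (L.foldl (fun G p => Meas G p.1 p.2) G) := by
  induction L with
  | nil => intro G hG; simpa using hG
  | cons p L IH =>
      intro G hG
      rw [List.foldl_cons]
      have hp := hL p List.mem_cons_self
      exact IH (fun q hq => hL q (List.mem_cons_of_mem p hq)) _
        (step_any hp.1 hp.2 hG)


lemma famS_case (e : Fin N → ℂ) (pp qq : Fin N → ℕ) (κ : Fin N → Bool) (t : Fin N) :
    (κ t = false → famS N e pp qq κ t = e t • ZStr N (pp t) (qq t)) ∧
    (κ t = true → famS N e pp qq κ t = e t • GStr N (pp t) (qq t)) := by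
  constructor
  · intro h
    rw [ZStr_eq]
    show e t • Pau (avOf N (pp t) (qq t) (κ t)) (bvOf N (pp t) (qq t) (κ t)) = _
    rw [h]
    rfl
  · intro h
    rw [GStr_eq]
    show e t • Pau (avOf N (pp t) (qq t) (κ t)) (bvOf N (pp t) (qq t) (κ t)) = _
    rw [h]
    rfl


/-- (`N` even.)  Let `G₀ = ⟨Z 1, …, Z N⟩` and let `G` be obtained from
`G₀` by finitely many measurement-updates `G ↦ Meas(G, M, ε)`, where each measured `M` is
either a `Z i` (`1 ≤ i ≤ N`) or a cluster stabilizer `g i = X(i−1) Z i X(i+1)`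
(`2 ≤ i ≤ N−1`) and each `ε ∈ {1, −1}`.  Then `G` is generated by `N` elements, each of
which is, up to a sign `±1`, either a string `Z_{p,q} = Z p · Z (p+2) ⋯ Z q` or a string
`g_{p,q} = X p (Z (p+1) Z (p+3) ⋯ Z (q−1)) X q` with `p ≤ q` (resp. `p < q`) of equal
parity. -/
theorem stabilizers_remain_string_operators {N : ℕ} (hN : Even N)
    (L : List (Op (Fin N) × ℂ))
    (hL : ∀ p ∈ L,
      ((∃ i : Fin N, p.1 = PZ i) ∨
        (∃ i : ℕ, 2 ≤ i ∧ i ≤ N - 1 ∧ p.1 = GStr N (i - 1) (i + 1))) ∧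
      (p.2 = 1 ∨ p.2 = -1)) :
    ∀ G : Submonoid (Op (Fin N)),
      G = L.foldl (fun G p => Meas G p.1 p.2)
        (Submonoid.closure (Set.range (PZ : Fin N → Op (Fin N)))) →
      ∃ s : Fin N → Op (Fin N),
        Submonoid.closure (Set.range s) = G ∧
        ∀ t : Fin N, ∃ ε : ℂ, (ε = 1 ∨ ε = -1) ∧
          ((∃ p q : ℕ, 1 ≤ p ∧ p ≤ q ∧ q ≤ N ∧ p % 2 = q % 2 ∧ s t = ε • ZStr N p q) ∨
            (∃ p q : ℕ, 1 ≤ p ∧ p < q ∧ q ≤ N ∧ p % 2 = q % 2 ∧ s t = ε • GStr N p q)) := by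
  intro G hG
  have hQ : GoodG G := by
    rw [hG]
    exact foldl_good L hL _ base_good
  obtain ⟨e, pp, qq, κ, hE, hW, hC, hI, hGeq⟩ := hQ
  refine ⟨famS N e pp qq κ, hGeq.symm, ?_⟩
  intro t
  refine ⟨e t, hE t, ?_⟩
  cases hκ : κ t
  · left
    have hw := hW t
    rw [hκ, wfP_false] at hw
    exact ⟨pp t, qq t, hw.1, hw.2.2.2, hw.2.1, hw.2.2.1, (famS_case e pp qq κ t).1 hκ⟩
  · right
    have hw := hW t
    rw [hκ, wfP_true] at hw
    exact ⟨pp t, qq t, hw.1, hw.2.2.2, hw.2.1, hw.2.2.1, (famS_case e pp qq κ t).2 hκ⟩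


end QStab
end
end

section
/- Let q_1 < q_2 < ⋯ < q_n be sites in {1, …, N} all of the same parity. Then for all 1 ≤ i < j ≤ n, the string operators satisfy the telescoping identity ∏_{k=i}^{j−1} g_{q_k, q_{k+1}} = g_{q_i, q_j}. In particular, the operators g_{q_i, q_{i+1}} (1 ≤ i ≤ n−1) appearing in the isolated-SPT stabilizer set 𝒮({q_1,…,q_n}) generate, under multiplication, all string operators g_{q_i, q_j} between any two points q_i < q_j of the set. -/
open scoped Classical
open scoped Matrix
noncomputable section
namespace QStab

variable {ι : Type*} [Fintype ι] [DecidableEq ι]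

lemma fin2_flip : ∀ x : Fin 2, x + 1 + 1 = x := by decide
lemma fin2_shift : ∀ x y a : Fin 2, (x = y + a ↔ x + a = y) := by decide
lemma fin2_shift2 : ∀ x y a b : Fin 2, (x + a = y + b ↔ x = y + (a + b)) := by decide
lemma fin2_swap : ∀ x y a : Fin 2, (x = y + a → y = x + a) := by decide
lemma fin2_cancel : ∀ x a : Fin 2, x = x + a + a := by decide

lemma update_invol (i : ι) (f : ι → Fin 2) :
    Function.update (Function.update f i (f i + 1)) i (Function.update f i (f i + 1) i + 1) = f := by
  funext j
  by_cases hj : j = i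
  · subst hj; simp [Function.update_self, fin2_flip]
  · simp [Function.update_of_ne hj]

lemma PX_pow_mul (i : ι) (x : Fin 2) (M : Op ι) :
    PX i ^ (x : ℕ) * M = Matrix.of fun f g => M (Function.update f i (f i + x)) g := by
  fin_cases x
  · ext f g
    simp [pow_zero, one_mul, Function.update_eq_self]
  · have key : ∀ f f' : ι → Fin 2,
        f = Function.update f' i (f' i + 1) ↔ f' = Function.update f i (f i + 1) := by
      intro f f'
      constructor <;> intro h <;> subst h <;> exact (update_invol i _).symm
    ext f g
    simp only [pow_one, Matrix.mul_apply, PX, Matrix.of_apply, ite_mul, one_mul, zero_mul]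
    have h2 : ∀ x : ι → Fin 2, (if f = Function.update x i (x i + 1) then M x g else 0)
        = if x = Function.update f i (f i + 1) then M x g else 0 := fun x => if_congr (key f x) rfl rfl
    simp only [h2]
    rw [Finset.sum_ite_eq' Finset.univ]
    simp

lemma XProd_eq_s17 (a : ι → Fin 2) :
    XProd a = Matrix.of fun f g => if (∀ i, f i = g i + a i) then 1 else 0 := by
  have main : ∀ L : List ι, L.Nodup →
      (L.map fun i => PX i ^ ((a i : ℕ))).prod
        = Matrix.of fun f g =>
            if (∀ i, f i = g i + (if i ∈ L then a i else 0)) then 1 else 0 := by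
    intro L
    induction L with
    | nil =>
      intro _
      ext f g
      simp only [List.map_nil, List.prod_nil, Matrix.one_apply, Matrix.of_apply,
        List.not_mem_nil, if_false, add_zero]
      exact if_congr (funext_iff (f := f) (g := g)) rfl rfl
    | cons i L ih =>
      intro hnd
      have hiL : i ∉ L := (List.nodup_cons.mp hnd).1
      rw [List.map_cons, List.prod_cons, ih (List.nodup_cons.mp hnd).2, PX_pow_mul]
      ext f g
      simp only [Matrix.of_apply]
      refine if_congr (forall_congr' fun j => ?_) rfl rfl
      by_cases hj : j = i
      · subst hj
        rw [Function.update_self, if_neg hiL, add_zero, if_pos (List.mem_cons_self (a := j) (l := L))]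
        exact (fin2_shift (f j) (g j) (a j)).symm
      · simp only [Function.update_of_ne hj, List.mem_cons, hj, false_or]
  rw [XProd, main Finset.univ.toList Finset.univ.nodup_toList]
  ext f g
  simp

lemma PZ_pow (i : ι) (x : Fin 2) :
    PZ i ^ (x : ℕ) = Matrix.diagonal fun f => (-1 : ℂ) ^ ((f i : ℕ) * (x : ℕ)) := by
  fin_cases x
  · simp [Matrix.diagonal_one]
  · ext f g
    simp [PZ, Matrix.diagonal]

lemma ZProd_eq_s17 (b : ι → Fin 2) :
    ZProd b = Matrix.diagonal fun f =>
      (Finset.univ.toList.map fun i => (-1 : ℂ) ^ ((f i : ℕ) * (b i : ℕ))).prod := by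
  have main : ∀ L : List ι, (L.map fun i => PZ i ^ ((b i : ℕ))).prod
      = Matrix.diagonal fun f => (L.map fun i => (-1 : ℂ) ^ ((f i : ℕ) * (b i : ℕ))).prod := by
    intro L
    induction L with
    | nil => simp
    | cons i L ih =>
      rw [List.map_cons, List.prod_cons, ih, PZ_pow, Matrix.diagonal_mul_diagonal]
      congr 1
  exact main _

lemma neg_one_pow_fin2 (m : ℕ) (x y : Fin 2) :
    (-1 : ℂ) ^ (m * (x : ℕ)) * (-1 : ℂ) ^ (m * (y : ℕ))
      = (-1 : ℂ) ^ (m * ((x + y : Fin 2) : ℕ)) := by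
  rw [← pow_add, ← mul_add]
  rw [neg_one_pow_eq_pow_mod_two, neg_one_pow_eq_pow_mod_two (n := m * ((x + y : Fin 2) : ℕ))]
  congr 1
  have h : ((x : ℕ) + (y : ℕ)) % 2 = ((x + y : Fin 2) : ℕ) % 2 := by fin_cases x <;> fin_cases y <;> decide
  rw [Nat.mul_mod, Nat.mul_mod m (((x + y : Fin 2) : ℕ)), h]

lemma XProd_mul (a a' : ι → Fin 2) : XProd a * XProd a' = XProd (a + a') := by
  rw [XProd_eq_s17, XProd_eq_s17, XProd_eq_s17]
  ext f g
  simp only [Matrix.mul_apply, Matrix.of_apply, ite_mul, one_mul, zero_mul, Pi.add_apply]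
  have h2 : ∀ x : ι → Fin 2, (∀ i, f i = x i + a i) ↔ x = fun i => f i + a i := by
    intro x
    constructor
    · intro h; funext i; exact fin2_swap (f i) (x i) (a i) (h i)
    · intro h i; rw [h]; exact fin2_cancel (f i) (a i)
  have h3 : ∀ x : ι → Fin 2,
      (if (∀ i, f i = x i + a i) then (if (∀ i, x i = g i + a' i) then (1:ℂ) else 0) else 0)
        = if x = fun i => f i + a i then (if (∀ i, x i = g i + a' i) then (1:ℂ) else 0) else 0 :=
    fun x => if_congr (h2 x) rfl rfl
  simp only [h3]
  rw [Finset.sum_ite_eq' Finset.univ]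
  simp only [Finset.mem_univ, if_true]
  refine if_congr (forall_congr' fun i => ?_) rfl rfl
  exact fin2_shift2 (f i) (g i) (a i) (a' i)

lemma ZProd_mul (b b' : ι → Fin 2) : ZProd b * ZProd b' = ZProd (b + b') := by
  rw [ZProd_eq_s17 b, ZProd_eq_s17 b', ZProd_eq_s17 (b + b'), Matrix.diagonal_mul_diagonal]
  refine congrArg Matrix.diagonal (funext fun f => ?_)
  rw [← List.prod_map_mul]
  refine congrArg List.prod (List.map_congr_left fun i _ => ?_)
  simp only [Pi.add_apply]
  exact neg_one_pow_fin2 ((f i : ℕ)) (b i) (b' i)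

lemma ZProd_comm_XProd (b a : ι → Fin 2) (h : ∀ i, b i = 0 ∨ a i = 0) :
    ZProd b * XProd a = XProd a * ZProd b := by
  rw [ZProd_eq_s17, XProd_eq_s17]
  ext f g
  rw [Matrix.diagonal_mul, Matrix.mul_diagonal]
  simp only [Matrix.of_apply]
  by_cases hc : ∀ i, f i = g i + a i
  · rw [if_pos hc, mul_one, one_mul]
    refine congrArg List.prod (List.map_congr_left fun i _ => ?_)
    rcases h i with hb | ha
    · rw [hb]; norm_num
    · have := hc i; rw [ha, add_zero] at this; rw [this]
  · rw [if_neg hc, mul_zero, zero_mul]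

lemma GStr_mul (N : ℕ) (p q r : ℕ) (hpq : p < q) (hqr : q < r) (hpar : p % 2 = q % 2) :
    GStr N p q * GStr N q r = GStr N p r := by
  unfold GStr
  rw [show ∀ A B C D : Op (Fin N), A * B * (C * D) = A * (B * C) * D by
    intros; noncomm_ring]
  rw [ZProd_comm_XProd _ _ (by
    intro i
    by_cases h1 : p < lbl i ∧ lbl i < q ∧ ¬(lbl i % 2 = p % 2)
    · right
      rw [if_neg]
      rintro (h | h) <;> omega
    · left; exact if_neg h1)]
  rw [show ∀ A B C D : Op (Fin N), A * (B * C) * D = (A * B) * (C * D) by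
    intros; noncomm_ring]
  rw [XProd_mul, ZProd_mul]
  have ha : ((fun i => if lbl i = p ∨ lbl i = q then (1 : Fin 2) else 0)
        + fun i => if lbl i = q ∨ lbl i = r then 1 else 0)
      = fun i : Fin N => if lbl i = p ∨ lbl i = r then 1 else 0 := by
    funext i
    simp only [Pi.add_apply]
    split_ifs <;> first | rfl | decide | (exfalso; omega)
  have hb : ((fun i => if p < lbl i ∧ lbl i < q ∧ ¬(lbl i % 2 = p % 2) then (1 : Fin 2) else 0)
        + fun i => if q < lbl i ∧ lbl i < r ∧ ¬(lbl i % 2 = q % 2) then 1 else 0)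
      = fun i : Fin N => if p < lbl i ∧ lbl i < r ∧ ¬(lbl i % 2 = p % 2) then 1 else 0 := by
    funext i
    simp only [Pi.add_apply]
    split_ifs <;> first | rfl | decide | (exfalso; omega)
  rw [ha, hb]

lemma telescope_aux {N n : ℕ} (q : ℕ → ℕ)
    (hmono : ∀ k l, k < l → l < n → q k < q l)
    (hparity : ∀ k l, k < n → l < n → q k % 2 = q l % 2) :
    ∀ d i, 0 < d → i + d < n →
      ((List.range d).map fun t => GStr N (q (i + t)) (q (i + t + 1))).prod
        = GStr N (q i) (q (i + d)) := by
  intro d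
  induction d with
  | zero => intro i h; omega
  | succ d ih =>
    intro i _ hin
    rcases Nat.eq_zero_or_pos d with hd | hd
    · subst hd
      simp only [List.range_succ, List.range_zero, List.nil_append, List.map_cons, List.map_nil, List.prod_cons,
        List.prod_nil, mul_one, Nat.add_zero]
    · rw [List.range_succ, List.map_append, List.prod_append, ih i hd (by omega)]
      simp only [List.map_cons, List.map_nil, List.prod_cons, List.prod_nil, mul_one]
      exact GStr_mul N (q i) (q (i + d)) (q (i + d + 1))
        (hmono i (i + d) (by omega) (by omega))
        (hmono (i + d) (i + d + 1) (by omega) (by omega))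
        (hparity i (i + d) (by omega) (by omega))


/-- Let `q 0 < q 1 < ⋯ < q (n−1)` be sites in `{1, …, N}`, all of the
same parity.  Then for all `i < j < n`, the string operators telescope:
`∏_{k=i}^{j−1} g_{q k, q (k+1)} = g_{q i, q j}`; in particular the consecutive string
operators of the isolated-SPT stabilizer set generate all string operators `g_{q i, q j}`. -/
theorem string_operators_telescope {N n : ℕ} (q : ℕ → ℕ)
    (hmono : ∀ k l, k < l → l < n → q k < q l)
    (hrange : ∀ k, k < n → 1 ≤ q k ∧ q k ≤ N)
    (hparity : ∀ k l, k < n → l < n → q k % 2 = q l % 2) :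
    (∀ i j, i < j → j < n →
      ((List.range (j - i)).map fun t => GStr N (q (i + t)) (q (i + t + 1))).prod
        = GStr N (q i) (q j)) ∧
    (∀ i j, i < j → j < n →
      GStr N (q i) (q j) ∈
        Submonoid.closure {m | ∃ k : ℕ, k + 1 < n ∧ m = GStr N (q k) (q (k + 1))}) := by
  have main : ∀ i j, i < j → j < n →
      ((List.range (j - i)).map fun t => GStr N (q (i + t)) (q (i + t + 1))).prod
        = GStr N (q i) (q j) := by
    intro i j hij hjn
    have h := telescope_aux (N := N) q hmono hparity (j - i) i (by omega) (by omega)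
    rwa [show i + (j - i) = j by omega] at h
  refine ⟨main, fun i j hij hjn => ?_⟩
  rw [← main i j hij hjn]
  refine Submonoid.list_prod_mem _ ?_
  intro x hx
  rw [List.mem_map] at hx
  obtain ⟨t, ht, rfl⟩ := hx
  rw [List.mem_range] at ht
  exact Submonoid.subset_closure ⟨i + t, by omega, rfl⟩
end QStab
end
end
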